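/- In any MatP instance, all dominant matchings cover the same set of agents; in particular, if an agent is unmatched in some dominant matching, then it is unmatched in every dominant matching. -/

import Mathlib

open Classical

/-- An instance of matching under preferences (MatP): a bipartite graph on
workers `W` and firms `F` together with, for each agent, a strict linear order
on its neighbors (`pref x y z` means `x` strictly prefers `y` to `z`). -/
structure MatP (α : Type*) where
  W : Finset α
  F : Finset α
  disjWF : Disjoint W F
  adj : α → α → Prop
  adj_symm : ∀ x y, adj x y → adj y x
  adj_loopless : ∀ x, ¬ adj x x
  adj_bipartite : ∀ x y, adj x y → (x ∈ W ∧ y ∈ F) ∨ (x ∈ F ∧ y ∈ W)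
  pref : α → α → α → Prop
  pref_adj : ∀ x y z, pref x y z → adj x y ∧ adj x z
  pref_trans : ∀ x y z w, pref x y z → pref x z w → pref x y w
  pref_irrefl : ∀ x y, ¬ pref x y y
  pref_total : ∀ x y z, adj x y → adj x z → y ≠ z → pref x y z ∨ pref x z y

/-- `M` is a matching of instance `I`, encoded as a symmetric partial partner
function: `M x = some y` means the edge `{x,y}` belongs to the matching. -/
def IsMatching {α : Type*} (I : MatP α) (M : α → Option α) : Prop :=
  (∀ x y, M x = some y → I.adj x y) ∧ (∀ x y, M x = some y → M y = some x)

/-- Agent `x` prefers (partner) option `o` to option `o'`: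
being matched beats being unmatched, and among partners `x` uses `I.pref`. -/
def Better {α : Type*} (I : MatP α) (x : α) : Option α → Option α → Prop
  | some _, none => True
  | some y, some z => I.pref x y z
  | none, _ => False

/-- The vote of agent `x` between partner options `o` and `o'`. -/
noncomputable def voteO {α : Type*} (I : MatP α) (x : α) (o o' : Option α) : ℤ :=
  if Better I x o o' then 1 else if Better I x o' o then -1 else 0

/-- Popularity margin `Δ^I(M,M')`: the sum of all agents' votes. -/
noncomputable def margin {α : Type*} [DecidableEq α]
    (I : MatP α) (M M' : α → Option α) : ℤ :=
  ∑ x ∈ I.W ∪ I.F, voteO I x (M x) (M' x)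

/-- `M` is popular for `I`: it does not lose against any matching. -/
def Popular {α : Type*} [DecidableEq α] (I : MatP α) (M : α → Option α) : Prop :=
  ∀ M', IsMatching I M' → 0 ≤ margin I M M'

/-- Number of matched agents: twice the number of edges of the matching. -/
noncomputable def msize {α : Type*} [Fintype α] (M : α → Option α) : ℕ :=
  (Finset.univ.filter fun x => (M x).isSome).card

/-- `M` is dominant for `I`: popular and strictly defeats every larger matching. -/
def Dominant {α : Type*} [Fintype α] [DecidableEq α]
    (I : MatP α) (M : α → Option α) : Prop :=
  Popular I M ∧ ∀ M', IsMatching I M' → msize M < msize M' → 0 < margin I M M'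

namespace DomCoverAux

variable {α : Type*}

/-- the map applied at step `n` of the alternating walk -/
def stp (M M' : α → Option α) (n : ℕ) : α → Option α :=
  if n % 2 = 0 then M else M'

/-- the alternating walk starting at `x`: follow `M`, then `M'`, then `M`, ... -/
def walk (M M' : α → Option α) (x : α) : ℕ → Option α
  | 0 => some x
  | n+1 => (walk M M' x n).bind (stp M M' n)

lemma walk_succ (M M' : α → Option α) (x : α) (n : ℕ) :
    walk M M' x (n+1) = (walk M M' x n).bind (stp M M' n) := rfl

section
variable {I : MatP α} {M M' : α → Option α}

lemma stp_symm (hM : IsMatching I M) (hM' : IsMatching I M') (n : ℕ) {v w : α}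
    (h : stp M M' n v = some w) : stp M M' n w = some v := by
  by_cases hn : n % 2 = 0
  · simp only [stp, if_pos hn] at h ⊢
    exact hM.2 _ _ h
  · simp only [stp, if_neg hn] at h ⊢
    exact hM'.2 _ _ h

lemma stp_not_self (hM : IsMatching I M) (hM' : IsMatching I M') (n : ℕ) (v : α)
    (h : stp M M' n v = some v) : False := by
  by_cases hn : n % 2 = 0
  · simp only [stp, if_pos hn] at h
    exact I.adj_loopless v (hM.1 _ _ h)
  · simp only [stp, if_neg hn] at h
    exact I.adj_loopless v (hM'.1 _ _ h)

lemma walk_inj (hM : IsMatching I M) (hM' : IsMatching I M') {x : α} (hx' : M' x = none) :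
    ∀ j i, i < j → ∀ v, walk M M' x i = some v → walk M M' x j = some v → False := by
  intro j
  induction j using Nat.strong_induction_on with
  | _ j IH =>
    intro i hij v hi hj
    obtain ⟨j', rfl⟩ : ∃ j', j = j' + 1 := ⟨j - 1, by omega⟩
    rw [walk_succ] at hj
    obtain ⟨u, hu, huv⟩ := Option.bind_eq_some_iff.mp hj
    have hvu : stp M M' j' v = some u := stp_symm hM hM' j' huv
    rcases Nat.eq_zero_or_pos i with rfl | hip
    · -- i = 0, v = x
      have hxv : x = v := by simpa [walk] using hi
      subst hxv
      by_cases hp : j' % 2 = 0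
      · have hMxu : M x = some u := by simpa [stp, hp] using hvu
        have h1 : walk M M' x 1 = some u := by simp [walk_succ, walk, stp, hMxu]
        rcases Nat.lt_trichotomy 1 j' with h | h | h
        · exact IH j' (by omega) 1 h u h1 hu
        · omega
        · -- j' = 0
          have hj0 : j' = 0 := by omega
          subst hj0
          have : u = x := by simpa [walk] using hu.symm
          subst this
          exact stp_not_self hM hM' 0 u hvu
      · have : M' x = some u := by simpa [stp, hp] using hvu
        rw [hx'] at this
        cases this
    · obtain ⟨i', rfl⟩ : ∃ i', i = i' + 1 := ⟨i - 1, by omega⟩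
      have hi2 := hi
      rw [walk_succ] at hi2
      obtain ⟨u', hu', hu'v⟩ := Option.bind_eq_some_iff.mp hi2
      have hvu' : stp M M' i' v = some u' := stp_symm hM hM' i' hu'v
      by_cases hpar : i' % 2 = j' % 2
      · have hst : stp M M' i' = stp M M' j' := by unfold stp; rw [hpar]
        rw [hst, hvu] at hvu'
        have huu : u = u' := Option.some.inj hvu'
        subst huu
        exact IH j' (by omega) i' (by omega) u hu' hu
      · have hst : stp M M' (i' + 1) = stp M M' j' := by
          unfold stp
          have : (i' + 1) % 2 = j' % 2 := by omega
          rw [this]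
        have hw : walk M M' x (i' + 1 + 1) = some u := by
          rw [walk_succ, hi]
          show stp M M' (i' + 1) v = some u
          rw [hst]; exact hvu
        rcases Nat.lt_trichotomy (i' + 2) j' with h | h | h
        · exact IH j' (by omega) (i' + 2) h u hw hu
        · omega
        · have hje : i' + 1 = j' := by omega
          subst hje
          have huv2 : u = v := by rw [hi] at hu; exact (Option.some.inj hu).symm
          subst huv2
          exact stp_not_self hM hM' (i' + 1) u hvu

lemma better_asymm (I : MatP α) (v : α) {o o' : Option α}
    (h : Better I v o o') : ¬ Better I v o' o := by
  intro h'
  cases o <;> cases o' <;> simp only [Better] at h h'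
  exact I.pref_irrefl _ _ (I.pref_trans _ _ _ _ h h')

lemma voteO_self (I : MatP α) (v : α) (o : Option α) : voteO I v o o = 0 := by
  have hb : ¬ Better I v o o := by
    cases o <;> simp only [Better]
    · exact not_false
    · exact I.pref_irrefl _ _
  simp [voteO, hb]

lemma voteO_antisymm (I : MatP α) (v : α) (o o' : Option α) :
    voteO I v o o' = - voteO I v o' o := by
  unfold voteO
  by_cases h1 : Better I v o o'
  · rw [if_pos h1, if_neg (better_asymm I v h1), if_pos h1]
    norm_num
  · by_cases h2 : Better I v o' o
    · rw [if_neg h1, if_pos h2, if_pos h2]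
    · rw [if_neg h1, if_neg h2, if_neg h2, if_neg h1]
      norm_num

lemma key [Fintype α] [DecidableEq α] (I : MatP α) (M M' : α → Option α)
    (hM : IsMatching I M) (hM' : IsMatching I M')
    (hD : Dominant I M) (hD' : Dominant I M')
    (x : α) (hx : (M x).isSome) (hx' : M' x = none) : False := by
  classical
  -- the walk terminates
  have hterm : ∃ n, walk M M' x n = none := by
    by_contra h
    push_neg at h
    have hs : ∀ n, (walk M M' x n).isSome := fun n => Option.ne_none_iff_isSome.mp (h n)
    obtain ⟨a, b, hab, hfe⟩ :=
      Finite.exists_ne_map_eq_of_infinite (fun n => (walk M M' x n).get (hs n))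
    have ha : walk M M' x a = some ((walk M M' x b).get (hs b)) := by
      rw [← hfe]; exact (Option.some_get (hs a)).symm
    have hb : walk M M' x b = some ((walk M M' x b).get (hs b)) := (Option.some_get (hs b)).symm
    rcases hab.lt_or_gt with h1 | h1
    · exact walk_inj hM hM' hx' b a h1 _ ha hb
    · exact walk_inj hM hM' hx' a b h1 _ hb ha
  obtain ⟨N, hN, hlt⟩ : ∃ N, walk M M' x N = none ∧ ∀ i, i < N → (walk M M' x i).isSome :=
    ⟨Nat.find hterm, Nat.find_spec hterm,
      fun i hi => Option.ne_none_iff_isSome.mp (Nat.find_min hterm hi)⟩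
  set vfun : ℕ → α := fun i => (walk M M' x i).getD x with hvdef
  have hsome : ∀ i, i < N → walk M M' x i = some (vfun i) := by
    intro i hi
    obtain ⟨w, hw⟩ := Option.isSome_iff_exists.mp (hlt i hi)
    simp [hvdef, hw]
  have hnone : ∀ m, N ≤ m → walk M M' x m = none := by
    intro m hm
    rcases Nat.exists_eq_add_of_le hm with ⟨k, rfl⟩
    induction k with
    | zero => simpa using hN
    | succ k ih =>
      show walk M M' x ((N + k) + 1) = none
      rw [walk_succ, ih (by omega)]
      rfl
  have hN2 : 2 ≤ N := by
    by_contra hc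
    push_neg at hc
    have h1 : walk M M' x 1 = M x := by simp [walk_succ, walk, stp]
    interval_cases N
    · simp [walk] at hN
    · rw [h1] at hN
      rw [hN] at hx
      simp at hx
  have hv0 : vfun 0 = x := by simp [hvdef, walk]
  have hinj : ∀ i, i < N → ∀ j, j < N → vfun i = vfun j → i = j := by
    intro i hi j hj hij
    by_contra hne
    rcases lt_or_gt_of_ne hne with h | h
    · exact walk_inj hM hM' hx' j i h (vfun i) (hsome i hi) (hij ▸ hsome j hj)
    · exact walk_inj hM hM' hx' i j h (vfun j) (hsome j hj) (hij ▸ hsome i hi)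
  set S : Finset α := (Finset.range N).image vfun with hSdef
  have hmemS : ∀ i, i < N → vfun i ∈ S := by
    intro i hi
    exact Finset.mem_image_of_mem vfun (Finset.mem_range.mpr hi)
  have hxS : x ∈ S := hv0 ▸ hmemS 0 (by omega)
  -- incoming edge
  have hincome : ∀ i, 0 < i → i < N → stp M M' (i - 1) (vfun i) = some (vfun (i - 1)) := by
    intro i h0 hiN
    obtain ⟨i', rfl⟩ : ∃ i', i = i' + 1 := ⟨i - 1, by omega⟩
    have h1 := hsome (i' + 1) hiN
    rw [walk_succ, hsome i' (by omega)] at h1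
    simp only [Option.bind_some] at h1
    have h2 := stp_symm hM hM' i' h1
    simpa using h2
  have houtgo : ∀ i, i < N → walk M M' x (i + 1) = stp M M' i (vfun i) := by
    intro i hi
    rw [walk_succ, hsome i hi]
    rfl
  -- closure of S under M and M'
  have hclosM : ∀ i, i < N → ∀ w, M (vfun i) = some w → w ∈ S := by
    intro i hi w hw
    by_cases hp : i % 2 = 0
    · have hw1 : walk M M' x (i + 1) = some w := by
        rw [houtgo i hi]
        simpa [stp, hp] using hw
      have hi1 : i + 1 < N := by
        by_contra hc
        rw [hnone (i + 1) (by omega)] at hw1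
        cases hw1
      have he : vfun (i + 1) = w := by
        have h2 := hsome (i + 1) hi1
        rw [hw1] at h2
        exact (Option.some.inj h2).symm
      exact he ▸ hmemS (i + 1) hi1
    · have h0 : 0 < i := by omega
      have hin := hincome i h0 hi
      have h3 : M (vfun i) = some (vfun (i - 1)) := by
        simpa [stp, show (i - 1) % 2 = 0 by omega] using hin
      rw [hw] at h3
      have he : vfun (i - 1) = w := (Option.some.inj h3).symm
      exact he ▸ hmemS (i - 1) (by omega)
  have hclosM' : ∀ i, i < N → ∀ w, M' (vfun i) = some w → w ∈ S := by
    intro i hi w hw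
    by_cases hp : i % 2 = 0
    · rcases Nat.eq_zero_or_pos i with rfl | h0
      · rw [hv0, hx'] at hw
        cases hw
      · have hin := hincome i h0 hi
        have h3 : M' (vfun i) = some (vfun (i - 1)) := by
          simpa [stp, show ¬ (i - 1) % 2 = 0 by omega] using hin
        rw [hw] at h3
        have he : vfun (i - 1) = w := (Option.some.inj h3).symm
        exact he ▸ hmemS (i - 1) (by omega)
    · have hw1 : walk M M' x (i + 1) = some w := by
        rw [houtgo i hi]
        simpa [stp, hp] using hw
      have hi1 : i + 1 < N := by
        by_contra hc
        rw [hnone (i + 1) (by omega)] at hw1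
        cases hw1
      have he : vfun (i + 1) = w := by
        have h2 := hsome (i + 1) hi1
        rw [hw1] at h2
        exact (Option.some.inj h2).symm
      exact he ▸ hmemS (i + 1) hi1
  have hclosSM : ∀ v ∈ S, ∀ w, M v = some w → w ∈ S := by
    intro v hv w hw
    obtain ⟨i, hi, rfl⟩ := Finset.mem_image.mp hv
    exact hclosM i (Finset.mem_range.mp hi) w hw
  have hclosSM' : ∀ v ∈ S, ∀ w, M' v = some w → w ∈ S := by
    intro v hv w hw
    obtain ⟨i, hi, rfl⟩ := Finset.mem_image.mp hv
    exact hclosM' i (Finset.mem_range.mp hi) w hw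
  -- each walk vertex is matched in at least one of M, M'
  have hone : ∀ i, i < N → (M (vfun i)).isSome ∨ (M' (vfun i)).isSome := by
    intro i hi
    rcases Nat.eq_zero_or_pos i with rfl | h0
    · left; rw [hv0]; exact hx
    · have hin := hincome i h0 hi
      by_cases hp : (i - 1) % 2 = 0
      · left
        have : M (vfun i) = some (vfun (i - 1)) := by simpa [stp, hp] using hin
        simp [this]
      · right
        have : M' (vfun i) = some (vfun (i - 1)) := by simpa [stp, hp] using hin
        simp [this]
  -- M and M' never give the same partner on S
  have hdiff : ∀ i, i < N → ∀ w, M (vfun i) = some w → M' (vfun i) = some w → False := by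
    intro i hi w hMw hM'w
    rcases Nat.eq_zero_or_pos i with rfl | h0
    · rw [hv0, hx'] at hM'w
      cases hM'w
    · have h1 : walk M M' x (i + 1) = some w := by
        rw [houtgo i hi]
        by_cases hp : i % 2 = 0 <;> simp [stp, hp, hMw, hM'w]
      have hin := hincome i h0 hi
      have h2' : stp M M' (i - 1) (vfun i) = some w := by
        by_cases hp : (i - 1) % 2 = 0 <;> simp [stp, hp, hMw, hM'w]
      rw [hin] at h2'
      have hw' : vfun (i - 1) = w := Option.some.inj h2'
      have h2 : walk M M' x (i - 1) = some w := hw' ▸ hsome (i - 1) (by omega)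
      exact walk_inj hM hM' hx' (i + 1) (i - 1) (by omega) w h2 h1
  -- S lies inside W ∪ F
  have hSsub : S ⊆ I.W ∪ I.F := by
    intro v hv
    obtain ⟨i, hi, rfl⟩ := Finset.mem_image.mp hv
    replace hi := Finset.mem_range.mp hi
    rcases hone i hi with h | h
    · obtain ⟨w, hw⟩ := Option.isSome_iff_exists.mp h
      rcases I.adj_bipartite _ _ (hM.1 _ _ hw) with ⟨h1, _⟩ | ⟨h1, _⟩ <;>
        simp [Finset.mem_union, h1]
    · obtain ⟨w, hw⟩ := Option.isSome_iff_exists.mp h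
      rcases I.adj_bipartite _ _ (hM'.1 _ _ hw) with ⟨h1, _⟩ | ⟨h1, _⟩ <;>
        simp [Finset.mem_union, h1]
  -- every vote on S is ±1
  have hpm : ∀ i, i < N →
      voteO I (vfun i) (M (vfun i)) (M' (vfun i)) = 1 ∨
      voteO I (vfun i) (M (vfun i)) (M' (vfun i)) = -1 := by
    intro i hi
    cases hMi : M (vfun i) with
    | none =>
      cases hM'i : M' (vfun i) with
      | none =>
        exfalso
        rcases hone i hi with h | h <;> simp [hMi, hM'i] at h
      | some z =>
        right
        simp [voteO, Better]
    | some y =>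
      cases hM'i : M' (vfun i) with
      | none =>
        left
        simp [voteO, Better]
      | some z =>
        have hyz : y ≠ z := fun h => hdiff i hi y hMi (h ▸ hM'i)
        rcases I.pref_total (vfun i) y z (hM.1 _ _ hMi) (hM'.1 _ _ hM'i) hyz with h | h
        · left; simp [voteO, Better, h]
        · right
          have hn : ¬ I.pref (vfun i) y z :=
            fun hh => I.pref_irrefl _ _ (I.pref_trans _ _ _ _ hh h)
          simp [voteO, Better, h, hn]
  -- the two hybrid matchings
  set K1 : α → Option α := fun v => if v ∈ S then M' v else M v with hK1
  set K2 : α → Option α := fun v => if v ∈ S then M v else M' v with hK2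
  have hK1m : IsMatching I K1 := by
    constructor
    · intro v w h
      by_cases hv : v ∈ S <;> simp only [hK1, if_pos, if_neg, hv, if_true, if_false] at h
      · exact hM'.1 _ _ h
      · exact hM.1 _ _ h
    · intro v w h
      by_cases hv : v ∈ S
      · simp only [hK1, if_pos hv] at h
        have hwS : w ∈ S := hclosSM' v hv w h
        simp only [hK1, if_pos hwS]
        exact hM'.2 _ _ h
      · simp only [hK1, if_neg hv] at h
        have hwS : w ∉ S := fun hw => hv (hclosSM w hw v (hM.2 _ _ h))
        simp only [hK1, if_neg hwS]
        exact hM.2 _ _ h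
  have hK2m : IsMatching I K2 := by
    constructor
    · intro v w h
      by_cases hv : v ∈ S <;> simp only [hK2, if_pos, if_neg, hv, if_true, if_false] at h
      · exact hM.1 _ _ h
      · exact hM'.1 _ _ h
    · intro v w h
      by_cases hv : v ∈ S
      · simp only [hK2, if_pos hv] at h
        have hwS : w ∈ S := hclosSM v hv w h
        simp only [hK2, if_pos hwS]
        exact hM.2 _ _ h
      · simp only [hK2, if_neg hv] at h
        have hwS : w ∉ S := fun hw => hv (hclosSM' w hw v (hM'.2 _ _ h))
        simp only [hK2, if_neg hwS]
        exact hM'.2 _ _ h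
  -- margins against the hybrids are sums over S
  have hmarg1 : margin I M K1 = ∑ v ∈ S, voteO I v (M v) (M' v) := by
    calc margin I M K1 = ∑ v ∈ I.W ∪ I.F, voteO I v (M v) (K1 v) := rfl
      _ = ∑ v ∈ S, voteO I v (M v) (K1 v) := by
          refine (Finset.sum_subset hSsub ?_).symm
          intro v _ hvS
          have : K1 v = M v := by simp only [hK1, if_neg hvS]
          rw [this, voteO_self]
      _ = ∑ v ∈ S, voteO I v (M v) (M' v) := by
          refine Finset.sum_congr rfl ?_
          intro v hv
          have : K1 v = M' v := by simp only [hK1, if_pos hv]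
          rw [this]
  have hmarg2 : margin I M' K2 = ∑ v ∈ S, voteO I v (M' v) (M v) := by
    calc margin I M' K2 = ∑ v ∈ I.W ∪ I.F, voteO I v (M' v) (K2 v) := rfl
      _ = ∑ v ∈ S, voteO I v (M' v) (K2 v) := by
          refine (Finset.sum_subset hSsub ?_).symm
          intro v _ hvS
          have : K2 v = M' v := by simp only [hK2, if_neg hvS]
          rw [this, voteO_self]
      _ = ∑ v ∈ S, voteO I v (M' v) (M v) := by
          refine Finset.sum_congr rfl ?_
          intro v hv
          have : K2 v = M v := by simp only [hK2, if_pos hv]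
          rw [this]
  have hanti : ∑ v ∈ S, voteO I v (M' v) (M v) = - ∑ v ∈ S, voteO I v (M v) (M' v) := by
    rw [← Finset.sum_neg_distrib]
    exact Finset.sum_congr rfl fun v _ => voteO_antisymm I v (M' v) (M v)
  have h1 : 0 ≤ ∑ v ∈ S, voteO I v (M v) (M' v) := hmarg1 ▸ hD.1 K1 hK1m
  by_cases hNp : N % 2 = 0
  · -- N even: K2 is strictly larger than M', contradiction with dominance of M'
    have hallM : ∀ i, i < N → (M (vfun i)).isSome := by
      intro i hi
      by_cases hp : i % 2 = 0
      · have hi1 : i + 1 < N := by omega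
        have h2 := hsome (i + 1) hi1
        rw [houtgo i hi] at h2
        have : M (vfun i) = some (vfun (i + 1)) := by simpa [stp, hp] using h2
        simp [this]
      · have hin := hincome i (by omega) hi
        have : M (vfun i) = some (vfun (i - 1)) := by
          simpa [stp, show (i - 1) % 2 = 0 by omega] using hin
        simp [this]
    have hms : msize M' < msize K2 := by
      unfold msize
      apply Finset.card_lt_card
      rw [Finset.ssubset_iff_of_subset]
      · refine ⟨x, ?_, ?_⟩
        · simp only [Finset.mem_filter, Finset.mem_univ, true_and, hK2, if_pos hxS]
          exact hx
        · simp [hx']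
      · intro v hv
        simp only [Finset.mem_filter, Finset.mem_univ, true_and] at hv ⊢
        by_cases hvS : v ∈ S
        · obtain ⟨i, hi, rfl⟩ := Finset.mem_image.mp hvS
          simp only [hK2, if_pos hvS]
          exact hallM i (Finset.mem_range.mp hi)
        · simpa [hK2, if_neg hvS] using hv
    have hpos := hD'.2 K2 hK2m hms
    rw [hmarg2, hanti] at hpos
    omega
  · -- N odd: each vote is ±1 and the total is 0: parity contradiction
    have h2 : 0 ≤ margin I M' K2 := hD'.1 K2 hK2m
    rw [hmarg2, hanti] at h2
    have hzero : ∑ v ∈ S, voteO I v (M v) (M' v) = 0 := le_antisymm (by omega) h1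
    have hre : ∑ v ∈ S, voteO I v (M v) (M' v)
        = ∑ i ∈ Finset.range N, voteO I (vfun i) (M (vfun i)) (M' (vfun i)) := by
      rw [hSdef]
      refine Finset.sum_image ?_
      intro i hi j hj hij
      exact hinj i (Finset.mem_range.mp hi) j (Finset.mem_range.mp hj) hij
    rw [hre] at hzero
    have hmod : ∀ i ∈ Finset.range N,
        voteO I (vfun i) (M (vfun i)) (M' (vfun i)) % 2 = 1 := by
      intro i hi
      rcases hpm i (Finset.mem_range.mp hi) with h | h <;> rw [h] <;> decide
    have hcontr : (0 : ℤ) % 2 = (N : ℤ) % 2 := by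
      calc (0 : ℤ) % 2 = (∑ i ∈ Finset.range N, voteO I (vfun i) (M (vfun i)) (M' (vfun i))) % 2 := by
            rw [hzero]
        _ = (∑ i ∈ Finset.range N, voteO I (vfun i) (M (vfun i)) (M' (vfun i)) % 2) % 2 :=
            Finset.sum_int_mod _ _ _
        _ = (∑ _i ∈ Finset.range N, (1 : ℤ)) % 2 := by rw [Finset.sum_congr rfl hmod]
        _ = (N : ℤ) % 2 := by simp
    omega

end

end DomCoverAux

/-- All dominant matchings of a MatP instance cover the same set of agents;
in particular, an agent unmatched in some dominant matching is unmatched in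
every dominant matching. -/
theorem dominant_same_cover {α : Type*} [Fintype α] [DecidableEq α]
    (I : MatP α) (M M' : α → Option α)
    (hM : IsMatching I M) (hM' : IsMatching I M')
    (hD : Dominant I M) (hD' : Dominant I M') :
    (∀ x, (M x).isSome ↔ (M' x).isSome) ∧ (∀ x, M x = none → M' x = none) := by
  constructor
  · intro y
    constructor
    · intro h
      by_contra hc
      exact DomCoverAux.key I M M' hM hM' hD hD' y h (Option.not_isSome_iff_eq_none.mp hc)
    · intro h
      by_contra hc
      exact DomCoverAux.key I M' M hM' hM hD' hD y h (Option.not_isSome_iff_eq_none.mp hc)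
  · intro y hy
    by_contra hc
    exact DomCoverAux.key I M' M hM' hM hD' hD y (Option.ne_none_iff_isSome.mp hc) hy
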